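/- Let Q₁, …, Q_r be pairwise non-order-isomorphic abstract polytopes, each of rank ≥ 0 and prime with respect to the join, let m₁, …, m_r ≥ 1, and let P = Q₁^{*m₁} * ⋯ * Q_r^{*m_r} (where Q^{*m} denotes the m-fold join of Q with itself). Then Aut(P) is isomorphic as a group to ∏_{i=1}^r (Aut(Q_i)^{m_i} ⋊ Sym(m_i)), where each symmetric group Sym(m_i) acts on Aut(Q_i)^{m_i} by permuting the coordinates. -/

import Mathlib

universe u v

/-- An abstract polytope of rank `n ≥ -1`: a partial order with a least element (the `⊥` of the
`OrderBot` instance) and a greatest element, in which every maximal chain has exactly `n + 2`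
elements, every interval admitting a maximal chain of at least 4 elements is connected, and the
diamond condition holds. -/
structure IsAbstractPolytope (P : Type u) [PartialOrder P] [OrderBot P] (n : ℤ) : Prop where
  neg_one_le : -1 ≤ n
  exists_top : ∃ t : P, IsTop t
  maxChain_card : ∀ s : Set P, IsMaxChain (· ≤ ·) s → s.ncard = (n + 2).toNat
  connected : ∀ x z : P, x ≤ z →
      (∃ c : Set (Set.Icc x z), IsMaxChain (· ≤ ·) c ∧ 4 ≤ c.ncard) →
      ∀ F G : Set.Icc x z, (F : P) ≠ x → (F : P) ≠ z → (G : P) ≠ x → (G : P) ≠ z →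
        Relation.ReflTransGen
          (fun a b : Set.Icc x z =>
            ((a : P) ≠ x ∧ (a : P) ≠ z ∧ (b : P) ≠ x ∧ (b : P) ≠ z) ∧
              ((a : P) ≤ (b : P) ∨ (b : P) ≤ (a : P))) F G
  diamond : ∀ x z : P, x < z →
      (∀ c : Set (Set.Icc x z), IsMaxChain (· ≤ ·) c → c.ncard = 4) →
      {y : P | x < y ∧ y < z}.ncard = 2

/-- `x` has rank `k` if every maximal chain of the interval `[⊥, x] = Set.Iic x`
has exactly `k + 2` elements. -/
def HasRank {P : Type u} [PartialOrder P] [OrderBot P] (x : P) (k : ℤ) : Prop :=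
  ∀ c : Set (Set.Iic x), IsMaxChain (· ≤ ·) c → c.ncard = (k + 2).toNat

/-- The Cartesian product `P ×c Q` of two bounded posets: the subposet of `P × Q`
consisting of `(⊥, ⊥)` together with all pairs with both entries different from `⊥`.
(The join `P * Q` is just `P × Q` with the componentwise order.) -/
abbrev CartProd (P : Type u) (Q : Type v) [PartialOrder P] [OrderBot P]
    [PartialOrder Q] [OrderBot Q] : Type (max u v) :=
  {x : P × Q // x = (⊥, ⊥) ∨ (x.1 ≠ ⊥ ∧ x.2 ≠ ⊥)}

instance CartProd.instOrderBot (P : Type u) (Q : Type v) [PartialOrder P] [OrderBot P]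
    [PartialOrder Q] [OrderBot Q] : OrderBot (CartProd P Q) where
  bot := ⟨(⊥, ⊥), Or.inl rfl⟩
  bot_le x := show ((⊥, ⊥) : P × Q) ≤ x.val from bot_le

/-- The iterated Cartesian product of a family of bounded posets: tuples which are either
everywhere `⊥` or nowhere `⊥`. -/
abbrev CartPi {ι : Type v} (Q : ι → Type u) [∀ i, PartialOrder (Q i)] [∀ i, OrderBot (Q i)] :
    Type (max u v) :=
  {f : (i : ι) → Q i // (∀ i, f i = ⊥) ∨ (∀ i, f i ≠ ⊥)}

instance CartPi.instOrderBot {ι : Type v} (Q : ι → Type u) [∀ i, PartialOrder (Q i)]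
    [∀ i, OrderBot (Q i)] : OrderBot (CartPi Q) where
  bot := ⟨fun _ => ⊥, Or.inl fun _ => rfl⟩
  bot_le f := show (fun _ => ⊥) ≤ f.val from bot_le

/-- The `k`-fold Cartesian product of a bounded poset with itself. -/
abbrev CartPow (P : Type u) [PartialOrder P] [OrderBot P] (k : ℕ) : Type u :=
  CartPi (fun _ : Fin k => P)

/-- A bundled poset with a least element. -/
structure BddPoset : Type (u + 1) where
  carrier : Type u
  [po : PartialOrder carrier]
  [ob : OrderBot carrier]

attribute [instance] BddPoset.po BddPoset.ob

instance : CoeSort BddPoset.{u} (Type u) := ⟨BddPoset.carrier⟩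

/-- Prime with respect to the join: not order-isomorphic to a join `A * B = A × B` of two
abstract polytopes of rank at least `0`. -/
def JoinPrime (X : Type u) [PartialOrder X] [OrderBot X] : Prop :=
  ¬ ∃ (A B : BddPoset.{u}) (a b : ℤ), 0 ≤ a ∧ 0 ≤ b ∧
      IsAbstractPolytope A.carrier a ∧ IsAbstractPolytope B.carrier b ∧
      Nonempty (X ≃o (A.carrier × B.carrier))

/-- Prime with respect to the Cartesian product: not order-isomorphic to a Cartesian product
of two abstract polytopes of rank at least `1`. -/
def CartPrime (X : Type u) [PartialOrder X] [OrderBot X] : Prop :=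
  ¬ ∃ (A B : BddPoset.{u}) (a b : ℤ), 1 ≤ a ∧ 1 ≤ b ∧
      IsAbstractPolytope A.carrier a ∧ IsAbstractPolytope B.carrier b ∧
      Nonempty (X ≃o CartProd A.carrier B.carrier)

/-- `R` is a factor of `X` with respect to the join. -/
def JoinFactor (R : BddPoset.{u}) (X : Type u) [PartialOrder X] [OrderBot X] : Prop :=
  ∃ S : BddPoset.{u}, (∃ s : ℤ, IsAbstractPolytope S.carrier s) ∧
    Nonempty (X ≃o (R.carrier × S.carrier))

/-- `R` is a factor of `X` with respect to the Cartesian product. -/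
def CartFactor (R : BddPoset.{u}) (X : Type u) [PartialOrder X] [OrderBot X] : Prop :=
  ∃ S : BddPoset.{u}, (∃ s : ℤ, IsAbstractPolytope S.carrier s) ∧
    Nonempty (X ≃o CartProd R.carrier S.carrier)

/-- Relatively prime with respect to the join: no join-prime abstract polytope of rank `≥ 0` is a
join-factor of both. -/
def JoinRelPrime (X : Type u) [PartialOrder X] [OrderBot X]
    (Y : Type u) [PartialOrder Y] [OrderBot Y] : Prop :=
  ¬ ∃ R : BddPoset.{u}, (∃ r : ℤ, 0 ≤ r ∧ IsAbstractPolytope R.carrier r) ∧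
      JoinPrime R.carrier ∧ JoinFactor R X ∧ JoinFactor R Y

/-- Relatively prime with respect to the Cartesian product. -/
def CartRelPrime (X : Type u) [PartialOrder X] [OrderBot X]
    (Y : Type u) [PartialOrder Y] [OrderBot Y] : Prop :=
  ¬ ∃ R : BddPoset.{u}, (∃ r : ℤ, 1 ≤ r ∧ IsAbstractPolytope R.carrier r) ∧
      CartPrime R.carrier ∧ CartFactor R X ∧ CartFactor R Y

/-- A pyramid: order-isomorphic to `Q * pt` for some abstract polytope `Q`, where
`pt = Bool` is the two-element chain. -/
def IsPyramid (X : Type u) [PartialOrder X] [OrderBot X] : Prop :=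
  ∃ Q : BddPoset.{u}, (∃ q : ℤ, IsAbstractPolytope Q.carrier q) ∧
    Nonempty (X ≃o (Q.carrier × Bool))

/-- A prism: order-isomorphic to `Q ×c I` for some abstract polytope `Q`, where
`I = Bool × Bool` is the four-element rank-one polytope. -/
def IsPrism (X : Type u) [PartialOrder X] [OrderBot X] : Prop :=
  ∃ Q : BddPoset.{u}, (∃ q : ℤ, IsAbstractPolytope Q.carrier q) ∧
    Nonempty (X ≃o CartProd Q.carrier (Bool × Bool))

/-- The homomorphism from `Equiv.Perm ι` to automorphisms of `ι → G` permuting the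
coordinates: `σ` sends `v` to `v ∘ σ⁻¹`. -/
def permHom (ι : Type v) (G : Type u) [Group G] : Equiv.Perm ι →* MulAut (ι → G) where
  toFun σ :=
    { toFun := fun v => v ∘ σ.symm
      invFun := fun v => v ∘ σ
      left_inv := fun v => by funext i; simp
      right_inv := fun v => by funext i; simp
      map_mul' := fun v w => rfl }
  map_one' := by apply MulEquiv.ext; intro v; funext i; rfl
  map_mul' σ τ := by apply MulEquiv.ext; intro v; funext i; rfl
section AuxPart1

open Set

set_option linter.unusedSectionVars false

variable {Q : Type u} [PartialOrder Q] [OrderBot Q]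

theorem IsMaxChain.mem_of_comparable {s : Set Q} (hs : IsMaxChain (· ≤ ·) s) {x : Q}
    (hx : ∀ c ∈ s, c ≤ x ∨ x ≤ c) : x ∈ s := by
  by_contra hxs
  have hchain : IsChain (· ≤ ·) (insert x s) := by
    intro a ha b hb hab
    rcases ha with rfl | ha
    · rcases hb with rfl | hb
      · exact absurd rfl hab
      · exact (hx b hb).symm
    · rcases hb with rfl | hb
      · exact hx a ha
      · exact hs.1 ha hb hab
  have := hs.2 hchain (Set.subset_insert x s)
  exact hxs (this ▸ Set.mem_insert x s)

theorem IsAbstractPolytope.maxChain_finite {n : ℤ} (hP : IsAbstractPolytope Q n)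
    {s : Set Q} (hs : IsMaxChain (· ≤ ·) s) : s.Finite ∧ s.ncard = (n + 2).toNat := by
  have hcard := hP.maxChain_card s hs
  have hn := hP.neg_one_le
  have hpos : 1 ≤ (n + 2).toNat := by omega
  refine ⟨?_, hcard⟩
  by_contra hinf
  have : s.Infinite := hinf
  rw [this.ncard] at hcard
  omega

theorem maxChain_union {y : Q} {C : Set (Set.Iic y)} {D : Set (Set.Ici y)}
    (hC : IsMaxChain (· ≤ ·) C) (hD : IsMaxChain (· ≤ ·) D) :
    IsMaxChain (· ≤ ·) ((Subtype.val '' C) ∪ (Subtype.val '' D)) := by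
  have hyC : (⟨y, le_refl y⟩ : Set.Iic y) ∈ C :=
    hC.mem_of_comparable (fun c _ => Or.inl c.2)
  have hyD : (⟨y, le_refl y⟩ : Set.Ici y) ∈ D :=
    hD.mem_of_comparable (fun c _ => Or.inr c.2)
  constructor
  · rintro a ha b hb hab
    rcases ha with ⟨a', ha', rfl⟩ | ⟨a', ha', rfl⟩ <;>
      rcases hb with ⟨b', hb', rfl⟩ | ⟨b', hb', rfl⟩
    · exact hC.1 ha' hb' (fun h => hab (congrArg _ h))
    · exact Or.inl (le_trans a'.2 b'.2)
    · exact Or.inr (le_trans b'.2 a'.2)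
    · exact hD.1 ha' hb' (fun h => hab (congrArg _ h))
  · intro t ht hsub
    apply Set.Subset.antisymm hsub
    intro z hz
    have hyt : y ∈ t := hsub (Or.inl ⟨_, hyC, rfl⟩)
    have hcomp : z ≤ y ∨ y ≤ z := by
      rcases eq_or_ne z y with rfl | hzy
      · exact Or.inl le_rfl
      · exact ht hz hyt hzy
    rcases hcomp with hzy | hyz
    · left
      refine ⟨⟨z, hzy⟩, ?_, rfl⟩
      apply hC.mem_of_comparable
      intro c hc
      have hct : (c : Q) ∈ t := hsub (Or.inl ⟨c, hc, rfl⟩)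
      rcases eq_or_ne (c : Q) z with h | h
      · exact Or.inl (Subtype.coe_le_coe.mp h.le)
      · exact (ht hct hz h).imp Subtype.coe_le_coe.mp Subtype.coe_le_coe.mp
    · right
      refine ⟨⟨z, hyz⟩, ?_, rfl⟩
      apply hD.mem_of_comparable
      intro c hc
      have hct : (c : Q) ∈ t := hsub (Or.inr ⟨c, hc, rfl⟩)
      rcases eq_or_ne (c : Q) z with h | h
      · exact Or.inl (Subtype.coe_le_coe.mp h.le)
      · exact (ht hct hz h).imp Subtype.coe_le_coe.mp Subtype.coe_le_coe.mp

theorem Iic_maxChain_card {n : ℤ} (hP : IsAbstractPolytope Q n) (y : Q) :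
    ∃ h : ℕ, 1 ≤ h ∧ (y ≠ ⊥ → 2 ≤ h) ∧
      ∀ C : Set (Set.Iic y), IsMaxChain (· ≤ ·) C → C.ncard = h := by
  obtain ⟨D, hD, -⟩ :=
    (IsChain.empty : IsChain (· ≤ ·) (∅ : Set (Set.Ici y))).exists_maxChain
  have key : ∀ C : Set (Set.Iic y), IsMaxChain (· ≤ ·) C →
      C.ncard + (Subtype.val '' D).ncard = (n + 2).toNat + 1 := by
    intro C hC
    have hU := maxChain_union hC hD
    obtain ⟨hUfin, hUcard⟩ := hP.maxChain_finite hU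
    have hCfin : (Subtype.val '' C).Finite := hUfin.subset Set.subset_union_left
    have hDfin : (Subtype.val '' D).Finite := hUfin.subset Set.subset_union_right
    have hint : (Subtype.val '' C) ∩ (Subtype.val '' D) = {y} := by
      apply Set.Subset.antisymm
      · rintro z ⟨⟨a, ha, rfl⟩, ⟨b, hb, hba⟩⟩
        exact le_antisymm a.2 (hba ▸ b.2)
      · intro z hz
        simp only [Set.mem_singleton_iff] at hz
        rw [hz]
        exact ⟨⟨⟨y, le_refl y⟩, hC.mem_of_comparable (fun c _ => Or.inl c.2), rfl⟩,
          ⟨⟨y, le_refl y⟩, hD.mem_of_comparable (fun c _ => Or.inr c.2), rfl⟩⟩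
    have := Set.ncard_union_add_ncard_inter (Subtype.val '' C) (Subtype.val '' D) hCfin hDfin
    rw [hint, hUcard, Set.ncard_singleton] at this
    rw [Set.ncard_image_of_injective C Subtype.val_injective] at this
    omega
  obtain ⟨C₀, hC₀, -⟩ :=
    (IsChain.empty : IsChain (· ≤ ·) (∅ : Set (Set.Iic y))).exists_maxChain
  have hC₀fin : C₀.Finite := by
    have hU := maxChain_union hC₀ hD
    have := (hP.maxChain_finite hU).1.subset (Set.subset_union_left)
    exact (Set.finite_image_iff Subtype.val_injective.injOn).mp this
  have hymem : (⟨y, le_refl y⟩ : Set.Iic y) ∈ C₀ :=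
    hC₀.mem_of_comparable (fun c _ => Or.inl c.2)
  refine ⟨C₀.ncard, ?_, ?_, ?_⟩
  · have : C₀.Nonempty := ⟨_, hymem⟩
    exact (Set.ncard_pos hC₀fin).mpr this
  · intro hy
    have hbmem : (⟨⊥, bot_le⟩ : Set.Iic y) ∈ C₀ :=
      hC₀.mem_of_comparable (fun c _ => Or.inr bot_le)
    refine (Set.one_lt_ncard hC₀fin).mpr ⟨_, hymem, _, hbmem, ?_⟩
    simp only [ne_eq, Subtype.mk.injEq]
    exact fun hh => hy (congrArg Subtype.val hh)
  · intro C hC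
    have h1 := key C hC
    have h2 := key C₀ hC₀
    omega

end AuxPart1
section AuxPart1b

open Set
set_option linter.unusedSectionVars false

theorem isMaxChain_image {α : Type*} {β : Type*} [Preorder α] [Preorder β] (e : α ≃o β)
    {s : Set α} (hs : IsMaxChain (· ≤ ·) s) : IsMaxChain (· ≤ ·) (e '' s) := by
  constructor
  · rintro _ ⟨a, ha, rfl⟩ _ ⟨b, hb, rfl⟩ hab
    rcases hs.1 ha hb (fun h => hab (congrArg e h)) with h | h
    · exact Or.inl (e.le_iff_le.mpr h)
    · exact Or.inr (e.le_iff_le.mpr h)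
  · intro t ht hsub
    have hts : e.symm '' t = s := by
      refine (hs.2 ?_ ?_).symm
      · rintro _ ⟨a, ha, rfl⟩ _ ⟨b, hb, rfl⟩ hab
        rcases ht ha hb (fun h => hab (congrArg e.symm h)) with h | h
        · exact Or.inl (e.symm.le_iff_le.mpr h)
        · exact Or.inr (e.symm.le_iff_le.mpr h)
      · intro a ha
        exact ⟨e a, hsub ⟨a, ha, rfl⟩, e.symm_apply_apply a⟩
    calc e '' s = e '' (e.symm '' t) := by rw [hts]
      _ = t := by rw [Set.image_image]; simp

/-- The interval `[x,z]` inside `Set.Iic y` is order isomorphic to the interval `[x,z]` in `Q`. -/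
def iccIso {Q : Type u} [PartialOrder Q] {y : Q} (x z : Set.Iic y) :
    Set.Icc x z ≃o Set.Icc (x : Q) (z : Q) where
  toFun w := ⟨((w : Set.Iic y) : Q), Subtype.coe_le_coe.mpr w.2.1, Subtype.coe_le_coe.mpr w.2.2⟩
  invFun w := ⟨⟨(w : Q), le_trans w.2.2 z.2⟩, Subtype.coe_le_coe.mp w.2.1,
    Subtype.coe_le_coe.mp w.2.2⟩
  left_inv w := by apply Subtype.ext; apply Subtype.ext; rfl
  right_inv w := by apply Subtype.ext; rfl
  map_rel_iff' := Iff.rfl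

theorem IsAbstractPolytope.iic {Q : Type u} [PartialOrder Q] [OrderBot Q] {n : ℤ}
    (hP : IsAbstractPolytope Q n) (y : Q) (hy : y ≠ ⊥) :
    ∃ k : ℤ, 0 ≤ k ∧ IsAbstractPolytope (Set.Iic y) k := by
  obtain ⟨h, h1, h2, hcard⟩ := Iic_maxChain_card hP y
  have h2' := h2 hy
  refine ⟨(h : ℤ) - 2, by omega, ?_, ?_, ?_, ?_, ?_⟩
  · omega
  · exact ⟨⟨y, le_refl y⟩, fun b => b.2⟩
  · intro s hs
    rw [hcard s hs]
    omega
  · -- connectedness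
    intro x z hxz hyp F G hF1 hF2 hG1 hG2
    obtain ⟨c, hc, hc4⟩ := hyp
    have hxz' : (x : Q) ≤ (z : Q) := Subtype.coe_le_coe.mpr hxz
    have hEF1 : ((iccIso x z F : Set.Icc (x : Q) (z : Q)) : Q) ≠ (x : Q) :=
      fun hh => hF1 (Subtype.coe_injective hh)
    have hEF2 : ((iccIso x z F : Set.Icc (x : Q) (z : Q)) : Q) ≠ (z : Q) :=
      fun hh => hF2 (Subtype.coe_injective hh)
    have hEG1 : ((iccIso x z G : Set.Icc (x : Q) (z : Q)) : Q) ≠ (x : Q) :=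
      fun hh => hG1 (Subtype.coe_injective hh)
    have hEG2 : ((iccIso x z G : Set.Icc (x : Q) (z : Q)) : Q) ≠ (z : Q) :=
      fun hh => hG2 (Subtype.coe_injective hh)
    have hconn := hP.connected (x : Q) (z : Q) hxz'
      ⟨iccIso x z '' c, isMaxChain_image (iccIso x z) hc, by
        rwa [Set.ncard_image_of_injective c (iccIso x z).injective]⟩
      (iccIso x z F) (iccIso x z G) hEF1 hEF2 hEG1 hEG2
    have hlift := Relation.ReflTransGen.lift (p := fun a b : Set.Icc x z =>
        ((a : Set.Iic y) ≠ x ∧ (a : Set.Iic y) ≠ z ∧ (b : Set.Iic y) ≠ x ∧ (b : Set.Iic y) ≠ z) ∧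
          ((a : Set.Iic y) ≤ (b : Set.Iic y) ∨ (b : Set.Iic y) ≤ (a : Set.Iic y)))
      (iccIso x z).symm (fun a b hab => ?_) _ _ hconn
    · rwa [Function.onFun, (iccIso x z).symm_apply_apply, (iccIso x z).symm_apply_apply] at hlift
    · obtain ⟨⟨ha1, ha2, hb1, hb2⟩, hab⟩ := hab
      refine ⟨⟨?_, ?_, ?_, ?_⟩, ?_⟩
      · exact fun hh => ha1 (congrArg Subtype.val hh)
      · exact fun hh => ha2 (congrArg Subtype.val hh)
      · exact fun hh => hb1 (congrArg Subtype.val hh)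
      · exact fun hh => hb2 (congrArg Subtype.val hh)
      · exact hab.imp Subtype.coe_le_coe.mp Subtype.coe_le_coe.mp
  · -- diamond
    intro x z hlt hchains
    have hlt' : (x : Q) < (z : Q) := Subtype.coe_lt_coe.mpr hlt
    have hd := hP.diamond (x : Q) (z : Q) hlt' ?_
    · have himg : Subtype.val '' {w : Set.Iic y | x < w ∧ w < z} =
          {w : Q | (x : Q) < w ∧ w < (z : Q)} := by
        apply Set.Subset.antisymm
        · rintro _ ⟨w, ⟨hw1, hw2⟩, rfl⟩
          exact ⟨Subtype.coe_lt_coe.mpr hw1, Subtype.coe_lt_coe.mpr hw2⟩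
        · rintro w ⟨hw1, hw2⟩
          exact ⟨⟨w, le_trans hw2.le z.2⟩, ⟨Subtype.coe_lt_coe.mp hw1,
            Subtype.coe_lt_coe.mp hw2⟩, rfl⟩
      rw [← Set.ncard_image_of_injective _ Subtype.val_injective, himg]
      exact hd
    · intro c' hc'
      have := hchains ((iccIso x z).symm '' c') (isMaxChain_image (iccIso x z).symm hc')
      rwa [Set.ncard_image_of_injective _ (iccIso x z).symm.injective] at this

end AuxPart1b
section AuxPart2

open Set
set_option linter.unusedSectionVars false

variable {ι : Type v} [DecidableEq ι] {P : ι → Type u}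
  [∀ k, PartialOrder (P k)] [∀ k, OrderBot (P k)]

/-- The element of the product supported at one coordinate. -/
def psingle (P : ι → Type u) [∀ k, PartialOrder (P k)] [∀ k, OrderBot (P k)]
    [DecidableEq ι] (k : ι) (a : P k) : ∀ l, P l :=
  Function.update (fun l => (⊥ : P l)) k a

theorem psingle_same (k : ι) (a : P k) : psingle P k a k = a :=
  Function.update_self k a _

theorem psingle_ne {k l : ι} (h : l ≠ k) (a : P k) : psingle P k a l = ⊥ :=
  Function.update_of_ne h a _

theorem psingle_bot (k : ι) : psingle P k (⊥ : P k) = ⊥ := by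
  funext l
  rcases eq_or_ne l k with rfl | h
  · rw [psingle_same]; rfl
  · rw [psingle_ne h]; rfl

theorem psingle_le {k : ι} {a : P k} {x : ∀ l, P l} : psingle P k a ≤ x ↔ a ≤ x k := by
  constructor
  · intro h
    have := h k
    rwa [psingle_same] at this
  · intro h l
    rcases eq_or_ne l k with rfl | hl
    · rwa [psingle_same]
    · rw [psingle_ne hl]; exact bot_le

theorem psingle_le_psingle {k : ι} {a b : P k} :
    psingle P k a ≤ psingle P k b ↔ a ≤ b := by
  rw [psingle_le, psingle_same]

theorem le_psingle {k : ι} {a : P k} {x : ∀ l, P l} (h : x ≤ psingle P k a) :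
    x = psingle P k (x k) := by
  funext l
  rcases eq_or_ne l k with rfl | hl
  · rw [psingle_same]
  · rw [psingle_ne hl]
    have := h l
    rw [psingle_ne hl] at this
    exact le_bot_iff.mp this

theorem psingle_ne_bot_iff {k : ι} {a : P k} : psingle P k a ≠ ⊥ ↔ a ≠ ⊥ := by
  constructor
  · intro h ha
    exact h (by rw [ha, psingle_bot])
  · intro h hb
    apply h
    have := congrFun hb k
    rwa [psingle_same] at this

theorem isGLB_psingle {T : ∀ k, P k} (hT : ∀ k, IsTop (T k)) (x : ∀ l, P l) (k : ι) :
    IsGLB {x, psingle P k (T k)} (psingle P k (x k)) := by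
  constructor
  · rintro w (rfl | rfl)
    · exact psingle_le.mpr le_rfl
    · exact psingle_le_psingle.mpr (hT k (x k))
  · intro z hz
    have hz1 : z ≤ x := hz (Set.mem_insert _ _)
    have hz2 : z ≤ psingle P k (T k) := hz (Set.mem_insert_of_mem _ rfl)
    intro l
    rcases eq_or_ne l k with rfl | hl
    · rw [psingle_same]; exact hz1 l
    · rw [psingle_ne hl]
      have := hz2 l
      rwa [psingle_ne hl] at this

/-- A direct pair structure on `(u, v)`. -/
def IsDirectPair {X : Type w} [PartialOrder X] (u v : X)
    (e : X ≃o Set.Iic u × Set.Iic v) : Prop :=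
  (∀ x, IsGLB {x, u} ((e x).1 : X)) ∧ (∀ x, IsGLB {x, v} ((e x).2 : X))

/-- An order isomorphism restricts to principal lower sets. -/
def OrderIso.restrictIic {X Y : Type*} [Preorder X] [Preorder Y] (g : X ≃o Y) (u : X) :
    Set.Iic u ≃o Set.Iic (g u) where
  toFun a := ⟨g a, g.le_iff_le.mpr a.2⟩
  invFun b := ⟨g.symm b, by
    have := g.symm.le_iff_le.mpr b.2
    rwa [g.symm_apply_apply] at this⟩
  left_inv a := Subtype.ext (g.symm_apply_apply a)
  right_inv b := Subtype.ext (g.apply_symm_apply b)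
  map_rel_iff' := g.le_iff_le

def OrderIso.prodMap {A B C D : Type*} [Preorder A] [Preorder B] [Preorder C] [Preorder D]
    (f : A ≃o B) (g : C ≃o D) : A × C ≃o B × D where
  toFun x := (f x.1, g x.2)
  invFun x := (f.symm x.1, g.symm x.2)
  left_inv x := by simp
  right_inv x := by simp
  map_rel_iff' := by
    intro a b
    simp [Prod.le_def]

def prodIic {A B : Type*} [Preorder A] [Preorder B] (a : A) (b : B) :
    Set.Iic (a, b) ≃o Set.Iic a × Set.Iic b where
  toFun w := (⟨w.1.1, w.2.1⟩, ⟨w.1.2, w.2.2⟩)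
  invFun w := ⟨(w.1, w.2), ⟨w.1.2, w.2.2⟩⟩
  left_inv w := rfl
  right_inv w := rfl
  map_rel_iff' := Iff.rfl

def iicIic {X : Type*} [Preorder X] {u : X} (c : Set.Iic u) :
    Set.Iic c ≃o Set.Iic (c : X) where
  toFun w := ⟨w.1.1, w.2⟩
  invFun w := ⟨⟨w.1, le_trans w.2 c.2⟩, w.2⟩
  left_inv w := rfl
  right_inv w := rfl
  map_rel_iff' := Iff.rfl

def singleIic (k : ι) (a : P k) : Set.Iic a ≃o Set.Iic (psingle P k a) where
  toFun b := ⟨psingle P k b, psingle_le_psingle.mpr b.2⟩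
  invFun y := ⟨(y : ∀ l, P l) k, by
    have := y.2 k
    rwa [psingle_same] at this⟩
  left_inv b := Subtype.ext (psingle_same (P := P) k (b : P k))
  right_inv y := Subtype.ext (le_psingle y.2).symm
  map_rel_iff' := psingle_le_psingle

def topIic {A : Type*} [Preorder A] {t : A} (ht : IsTop t) : A ≃o Set.Iic t where
  toFun a := ⟨a, ht a⟩
  invFun a := a
  left_inv _ := rfl
  right_inv _ := rfl
  map_rel_iff' := Iff.rfl

theorem not_prod_of_joinPrime {A : Type u} [PartialOrder A] [OrderBot A]
    {n : ℤ} (hA : IsAbstractPolytope A n) (hp : JoinPrime A)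
    {a b : A} (ha : a ≠ ⊥) (hb : b ≠ ⊥)
    (e : A ≃o Set.Iic a × Set.Iic b) : False := by
  obtain ⟨ka, hka0, hka⟩ := hA.iic a ha
  obtain ⟨kb, hkb0, hkb⟩ := hA.iic b hb
  exact hp ⟨⟨↥(Set.Iic a)⟩, ⟨↥(Set.Iic b)⟩, ka, kb, hka0, hkb0, hka, hkb, ⟨e⟩⟩

theorem directPair_coord {T : ∀ k, P k} (hT : ∀ k, IsTop (T k))
    (hpoly : ∀ k, ∃ n : ℤ, 0 ≤ n ∧ IsAbstractPolytope (P k) n)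
    (hprime : ∀ k, JoinPrime (P k))
    {u v : ∀ k, P k} (e : (∀ k, P k) ≃o Set.Iic u × Set.Iic v)
    (he : IsDirectPair u v e) (k : ι) : u k = T k ∨ u k = ⊥ := by
  obtain ⟨h1, h2⟩ := he
  have hbotuv : IsGLB {u, v} (⊥ : ∀ l, P l) := by
    have hex : e (e.symm (⟨u, le_refl u⟩, ⟨⊥, Set.mem_Iic.mpr bot_le⟩)) = (⟨u, le_refl u⟩, ⟨⊥, Set.mem_Iic.mpr bot_le⟩) :=
      e.apply_symm_apply _
    set x := e.symm (⟨u, le_refl u⟩, ⟨⊥, Set.mem_Iic.mpr bot_le⟩) with hxdef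
    have h1x := h1 x
    rw [hex] at h1x
    have hux : u ≤ x := h1x.1 (Set.mem_insert x {u})
    have hmap : e u ≤ e x := e.le_iff_le.mpr hux
    have h2le : ((e u).2 : ∀ l, P l) ≤ ⊥ := by
      have h22 := hmap.2
      rw [hex] at h22
      exact h22
    have h2u := h2 u
    have hbot : ((e u).2 : ∀ l, P l) = ⊥ := le_bot_iff.mp h2le
    rwa [hbot] at h2u
  set uk := psingle P k (T k) with huk
  have hpglb := h1 uk
  have hqglb := h2 uk
  set p := ((e uk).1 : ∀ l, P l) with hpdef
  set q := ((e uk).2 : ∀ l, P l) with hqdef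
  have hpuk : p ≤ uk := hpglb.1 (Set.mem_insert _ _)
  have hpu : p ≤ u := hpglb.1 (Set.mem_insert_of_mem _ rfl)
  have hquk : q ≤ uk := hqglb.1 (Set.mem_insert _ _)
  have hqv : q ≤ v := hqglb.1 (Set.mem_insert_of_mem _ rfl)
  have hpsing : p = psingle P k (p k) := le_psingle hpuk
  have hqsing : q = psingle P k (q k) := le_psingle hquk
  have hdisj : p k = ⊥ ∨ q k = ⊥ := by
    by_contra hc
    push_neg at hc
    obtain ⟨n, hn0, hpol⟩ := hpoly k
    have i1 : P k ≃o Set.Iic uk := (topIic (hT k)).trans (singleIic k (T k))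
    have i2 : Set.Iic uk ≃o Set.Iic (e uk) := e.restrictIic uk
    have i3 : Set.Iic (e uk) ≃o Set.Iic ((e uk).1) × Set.Iic ((e uk).2) :=
      prodIic ((e uk).1) ((e uk).2)
    have i4a : Set.Iic ((e uk).1) ≃o Set.Iic p := iicIic ((e uk).1)
    have i4b : Set.Iic ((e uk).2) ≃o Set.Iic q := iicIic ((e uk).2)
    have i5a : Set.Iic p ≃o Set.Iic (p k) := by
      rw [show Set.Iic p = Set.Iic (psingle P k (p k)) from congrArg _ hpsing]
      exact (singleIic k (p k)).symm
    have i5b : Set.Iic q ≃o Set.Iic (q k) := by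
      rw [show Set.Iic q = Set.Iic (psingle P k (q k)) from congrArg _ hqsing]
      exact (singleIic k (q k)).symm
    have iso : P k ≃o Set.Iic (p k) × Set.Iic (q k) :=
      (((i1.trans i2).trans i3).trans (OrderIso.prodMap i4a i4b)).trans
        (OrderIso.prodMap i5a i5b)
    exact not_prod_of_joinPrime hpol (hprime k) hc.1 hc.2 iso
  rcases hdisj with hpk | hqk
  · -- `p = ⊥`, so `uk ≤ v` and `u k = ⊥`.
    right
    have hpbot : p = ⊥ := by rw [hpsing, hpk, psingle_bot]
    have hqq : IsGLB {q, v} q := by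
      constructor
      · rintro w (rfl | rfl)
        · exact le_rfl
        · exact hqv
      · intro z hz
        exact hz (Set.mem_insert _ _)
    have hbotq : IsGLB {q, u} (⊥ : ∀ l, P l) := by
      constructor
      · rintro w (rfl | rfl) <;> exact bot_le
      · intro z hz
        have hz1 : z ≤ q := hz (Set.mem_insert _ _)
        have hz2 : z ≤ u := hz (Set.mem_insert_of_mem _ rfl)
        have : z ≤ p := by
          apply hpglb.2
          rintro w (rfl | rfl)
          · exact le_trans hz1 hquk
          · exact hz2
        rwa [hpbot] at this
    have e1q : ((e q).1 : ∀ l, P l) = ⊥ := (h1 q).unique hbotq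
    have e2q : ((e q).2 : ∀ l, P l) = q := (h2 q).unique hqq
    have heq : e q = e uk := by
      have c1 : (e q).1 = (e uk).1 := Subtype.ext (by rw [e1q, ← hpdef, hpbot])
      have c2 : (e q).2 = (e uk).2 := Subtype.ext (by rw [e2q, ← hqdef])
      exact Prod.ext c1 c2
    have hqeq : q = uk := e.injective heq
    have hukv : uk ≤ v := hqeq ▸ hqv
    have hzlb : psingle P k (u k) ≤ ⊥ := by
      apply hbotuv.2
      rintro w (rfl | rfl)
      · exact psingle_le.mpr le_rfl
      · exact le_trans (psingle_le_psingle.mpr (hT k (u k))) hukv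
    have := hzlb k
    rw [psingle_same] at this
    exact le_bot_iff.mp this
  · -- `q = ⊥`, so `uk ≤ u` and `u k = T k`.
    left
    have hqbot : q = ⊥ := by rw [hqsing, hqk, psingle_bot]
    have hpp : IsGLB {p, u} p := by
      constructor
      · rintro w (rfl | rfl)
        · exact le_rfl
        · exact hpu
      · intro z hz
        exact hz (Set.mem_insert _ _)
    have hbotp : IsGLB {p, v} (⊥ : ∀ l, P l) := by
      constructor
      · rintro w (rfl | rfl) <;> exact bot_le
      · intro z hz
        have hz1 : z ≤ p := hz (Set.mem_insert _ _)
        have hz2 : z ≤ v := hz (Set.mem_insert_of_mem _ rfl)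
        have : z ≤ q := by
          apply hqglb.2
          rintro w (rfl | rfl)
          · exact le_trans hz1 hpuk
          · exact hz2
        rwa [hqbot] at this
    have e1p : ((e p).1 : ∀ l, P l) = p := (h1 p).unique hpp
    have e2p : ((e p).2 : ∀ l, P l) = ⊥ := (h2 p).unique hbotp
    have heq : e p = e uk := by
      have c1 : (e p).1 = (e uk).1 := Subtype.ext (by rw [e1p, ← hpdef])
      have c2 : (e p).2 = (e uk).2 := Subtype.ext (by rw [e2p, ← hqdef, hqbot])
      exact Prod.ext c1 c2
    have hpeq : p = uk := e.injective heq
    have hupk : uk ≤ u := hpeq ▸ hpu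
    have h1k : T k ≤ u k := by
      have := hupk k
      rw [huk] at this
      rwa [psingle_same] at this
    exact le_antisymm (hT k (u k)) h1k
/-- The complement of the `k`-th coordinate: top everywhere except at `k`. -/
def wcompl (T : ∀ k, P k) (k : ι) : ∀ l, P l := fun l => if l = k then ⊥ else T l

theorem update_le_wcompl {T : ∀ k, P k} (hT : ∀ k, IsTop (T k)) (x : ∀ l, P l) (k : ι) :
    Function.update x k ⊥ ≤ wcompl T k := by
  intro l
  rcases eq_or_ne l k with rfl | hl
  · rw [Function.update_self]
    exact bot_le
  · rw [Function.update_of_ne hl, wcompl, if_neg hl]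
    exact hT l (x l)

theorem update_bot_le (x : ∀ l, P l) (k : ι) : Function.update x k ⊥ ≤ x := by
  intro l
  rcases eq_or_ne l k with rfl | hl
  · rw [Function.update_self]
    exact bot_le
  · rw [Function.update_of_ne hl]

def baseIso (T : ∀ k, P k) (hT : ∀ k, IsTop (T k)) (k : ι) :
    (∀ l, P l) ≃o Set.Iic (psingle P k (T k)) × Set.Iic (wcompl T k) where
  toFun x := (⟨psingle P k (x k), psingle_le_psingle.mpr (hT k (x k))⟩,
    ⟨Function.update x k ⊥, update_le_wcompl hT x k⟩)
  invFun y := Function.update ((y.2 : ∀ l, P l)) k (((y.1 : ∀ l, P l)) k)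
  left_inv x := by
    funext l
    dsimp only
    rcases eq_or_ne l k with rfl | hl
    · rw [Function.update_self, psingle_same]
    · rw [Function.update_of_ne hl, Function.update_of_ne hl]
  right_inv y := by
    dsimp only
    have h1 : (y.1 : ∀ l, P l) = psingle P k ((y.1 : ∀ l, P l) k) := le_psingle y.1.2
    apply Prod.ext
    · apply Subtype.ext
      show psingle P k (Function.update ((y.2 : ∀ l, P l)) k (((y.1 : ∀ l, P l)) k) k) =
        (y.1 : ∀ l, P l)
      rw [Function.update_self, ← h1]
    · apply Subtype.ext
      show Function.update (Function.update ((y.2 : ∀ l, P l)) k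
        (((y.1 : ∀ l, P l)) k)) k ⊥ = (y.2 : ∀ l, P l)
      funext l
      rcases eq_or_ne l k with rfl | hl
      · rw [Function.update_self]
        have := y.2.2 l
        rw [wcompl, if_pos rfl] at this
        exact (le_bot_iff.mp this).symm
      · rw [Function.update_of_ne hl, Function.update_of_ne hl]
  map_rel_iff' := by
    intro x y
    constructor
    · intro hle
      have h1 : psingle P k (x k) ≤ psingle P k (y k) := hle.1
      have h2 : Function.update x k ⊥ ≤ Function.update y k ⊥ := hle.2
      intro l
      rcases eq_or_ne l k with rfl | hl
      · exact psingle_le_psingle.mp h1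
      · have := h2 l
        rwa [Function.update_of_ne hl, Function.update_of_ne hl] at this
    · intro hxy
      refine ⟨?_, ?_⟩
      · show psingle P k (x k) ≤ psingle P k (y k)
        exact psingle_le_psingle.mpr (hxy k)
      · show Function.update x k ⊥ ≤ Function.update y k ⊥
        intro l
        rcases eq_or_ne l k with rfl | hl
        · rw [Function.update_self]
          exact bot_le
        · rw [Function.update_of_ne hl, Function.update_of_ne hl]
          exact hxy l

theorem baseIso_directPair (T : ∀ k, P k) (hT : ∀ k, IsTop (T k)) (k : ι) :
    IsDirectPair (psingle P k (T k)) (wcompl T k) (baseIso T hT k) := by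
  constructor
  · intro x
    exact isGLB_psingle hT x k
  · intro x
    have hfst : ((baseIso T hT k x).2 : ∀ l, P l) = Function.update x k ⊥ := rfl
    constructor
    · intro w hw
      rw [hfst]
      rcases hw with h | h
      · rw [h]
        exact update_bot_le x k
      · rw [h]
        exact update_le_wcompl hT x k
    · intro z hz
      rw [hfst]
      have hz1 : z ≤ x := hz (Set.mem_insert _ _)
      have hz2 : z ≤ wcompl T k := hz (Set.mem_insert_of_mem _ rfl)
      intro l
      rcases eq_or_ne l k with rfl | hl
      · rw [Function.update_self]
        have := hz2 l
        rwa [wcompl, if_pos rfl] at this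
      · rw [Function.update_of_ne hl]
        exact hz1 l

theorem IsDirectPair.map {u v : ∀ k, P k} {e : (∀ k, P k) ≃o Set.Iic u × Set.Iic v}
    (he : IsDirectPair u v e) (g : (∀ k, P k) ≃o (∀ k, P k)) :
    IsDirectPair (g u) (g v)
      ((g.symm.trans e).trans (OrderIso.prodMap (g.restrictIic u) (g.restrictIic v))) := by
  constructor
  · intro x
    have h := g.isGLB_image'.mpr (he.1 (g.symm x))
    rw [Set.image_pair, g.apply_symm_apply] at h
    exact h
  · intro x
    have h := g.isGLB_image'.mpr (he.2 (g.symm x))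
    rw [Set.image_pair, g.apply_symm_apply] at h
    exact h

theorem key_decomp {T : ∀ k, P k} (hT : ∀ k, IsTop (T k)) (hTb : ∀ k, T k ≠ ⊥)
    (hpoly : ∀ k, ∃ n : ℤ, 0 ≤ n ∧ IsAbstractPolytope (P k) n)
    (hprime : ∀ k, JoinPrime (P k))
    (g : (∀ k, P k) ≃o (∀ k, P k)) :
    ∃ σ : ι → ι, ∀ (x : ∀ k, P k) (k : ι),
      g (psingle P k (x k)) = psingle P (σ k) (g x (σ k)) := by
  have transport : ∀ (g' : (∀ k, P k) ≃o (∀ k, P k)) (k l : ι),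
      g' (psingle P k (T k)) l = T l ∨ g' (psingle P k (T k)) l = ⊥ := by
    intro g' k l
    exact directPair_coord hT hpoly hprime _ ((baseIso_directPair T hT k).map g') l
  have hsingle : ∀ (g' : (∀ k, P k) ≃o (∀ k, P k)) (k : ι),
      ∃ l, g' (psingle P k (T k)) = psingle P l (T l) := by
    intro g' k
    have hne : g' (psingle P k (T k)) ≠ ⊥ := by
      intro hb
      have : psingle P k (T k) = (⊥ : ∀ l, P l) := by
        apply g'.injective
        rw [hb, g'.map_bot]
      exact (psingle_ne_bot_iff.mpr (hTb k)) this
    have : ∃ l, g' (psingle P k (T k)) l ≠ ⊥ := by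
      by_contra hc
      push_neg at hc
      exact hne (funext fun l => hc l)
    obtain ⟨l, hl⟩ := this
    have hval : g' (psingle P k (T k)) l = T l :=
      (transport g' k l).resolve_right hl
    refine ⟨l, ?_⟩
    -- `psingle l (T l) ≤ g' uk`, pull back with `g'.symm`.
    have hle : psingle P l (T l) ≤ g' (psingle P k (T k)) := by
      rw [psingle_le, hval]
    have hw : g'.symm (psingle P l (T l)) ≤ psingle P k (T k) := by
      have := g'.symm.le_iff_le.mpr hle
      rwa [g'.symm_apply_apply] at this
    have hwsing : g'.symm (psingle P l (T l)) =
        psingle P k (g'.symm (psingle P l (T l)) k) := le_psingle hw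
    have hwk : g'.symm (psingle P l (T l)) k = T k := by
      rcases transport g'.symm l k with h | h
      · exact h
      · exfalso
        have : g'.symm (psingle P l (T l)) = ⊥ := by
          rw [hwsing, h, psingle_bot]
        have hTl : psingle P l (T l) = (⊥ : ∀ l', P l') := by
          have := congrArg g' this
          rwa [g'.apply_symm_apply, g'.map_bot] at this
        exact (psingle_ne_bot_iff.mpr (hTb l)) hTl
    have : g'.symm (psingle P l (T l)) = psingle P k (T k) := by
      rw [hwsing, hwk]
    have h2 := congrArg g' this
    rw [g'.apply_symm_apply] at h2
    exact h2.symm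
  choose σ hσ using hsingle g
  refine ⟨σ, ?_⟩
  intro x k
  have hglb := isGLB_psingle hT x k
  have hmap : IsGLB {g x, g (psingle P k (T k))} (g (psingle P k (x k))) := by
    have := g.isGLB_image'.mpr hglb
    rwa [Set.image_pair] at this
  rw [hσ k] at hmap
  exact hmap.unique (isGLB_psingle hT (g x) (σ k))

end AuxPart2

section AuxPart3

open Set
set_option linter.unusedSectionVars false

theorem IsAbstractPolytope.top_ne_bot {Q : Type u} [PartialOrder Q] [OrderBot Q] {n : ℤ}
    (hP : IsAbstractPolytope Q n) (hn : 0 ≤ n) {t : Q} (ht : IsTop t) : t ≠ ⊥ := by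
  obtain ⟨M, hM, -⟩ := (IsChain.empty : IsChain (· ≤ ·) (∅ : Set Q)).exists_maxChain
  obtain ⟨hfin, hcard⟩ := hP.maxChain_finite hM
  obtain ⟨a, ha, b, hb, hab⟩ := (Set.one_lt_ncard hfin).mp (by omega)
  intro hbot
  apply hab
  have ha' : a = ⊥ := le_bot_iff.mp (hbot ▸ ht a)
  have hb' : b = ⊥ := le_bot_iff.mp (hbot ▸ ht b)
  rw [ha', hb']

/-- Currying the doubly-indexed product as a product over a sigma type. -/
def curryIso {r : ℕ} (Q : Fin r → BddPoset.{u}) (m : Fin r → ℕ) :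
    ((i : Fin r) → Fin (m i) → (Q i).carrier) ≃o
      (∀ k : (i : Fin r) × Fin (m i), (Q k.1).carrier) where
  toFun x k := x k.1 k.2
  invFun y i j := y ⟨i, j⟩
  left_inv x := rfl
  right_inv y := rfl
  map_rel_iff' := by
    intro x y
    constructor
    · intro h i j
      exact h ⟨i, j⟩
    · intro h k
      exact h k.1 k.2

theorem sigma_fin_eq {r : ℕ} {m : Fin r → ℕ} (k : (i : Fin r) × Fin (m i)) (i : Fin r)
    (h : k.1 = i) : k = ⟨i, Fin.cast (congrArg m h) k.2⟩ := by
  rcases k with ⟨a, b⟩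
  subst h
  rfl

variable {r : ℕ} (Q : Fin r → BddPoset.{u}) (m : Fin r → ℕ)

abbrev WreathH (Q : Fin r → BddPoset.{u}) (m : Fin r → ℕ) : Type u :=
  (i : Fin r) → (Fin (m i) → ((Q i).carrier ≃o (Q i).carrier))
    ⋊[permHom (Fin (m i)) ((Q i).carrier ≃o (Q i).carrier)] Equiv.Perm (Fin (m i))

def PhiIso (h : WreathH Q m) :
    ((i : Fin r) → Fin (m i) → (Q i).carrier) ≃o
      ((i : Fin r) → Fin (m i) → (Q i).carrier) where
  toFun x i j := (h i).left j (x i ((h i).right⁻¹ j))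
  invFun x i j := ((h i).left ((h i).right j)).symm (x i ((h i).right j))
  left_inv x := by
    funext i j
    dsimp only
    rw [OrderIso.symm_apply_apply, Equiv.Perm.inv_def, Equiv.symm_apply_apply]
  right_inv x := by
    funext i j
    dsimp only
    rw [Equiv.Perm.inv_def, Equiv.apply_symm_apply, OrderIso.apply_symm_apply]
  map_rel_iff' := by
    intro x y
    constructor
    · intro hle i j
      have h1 : (h i).left ((h i).right j) (x i ((h i).right⁻¹ ((h i).right j))) ≤
          (h i).left ((h i).right j) (y i ((h i).right⁻¹ ((h i).right j))) :=
        hle i ((h i).right j)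
      rw [Equiv.Perm.inv_def, Equiv.symm_apply_apply] at h1
      exact ((h i).left ((h i).right j)).le_iff_le.mp h1
    · intro hxy i j
      show (h i).left j (x i ((h i).right⁻¹ j)) ≤ (h i).left j (y i ((h i).right⁻¹ j))
      exact ((h i).left j).le_iff_le.mpr (hxy i _)

theorem Phi_mul (h₁ h₂ : WreathH Q m) :
    PhiIso Q m (h₁ * h₂) = PhiIso Q m h₁ * PhiIso Q m h₂ := by
  apply DFunLike.ext
  intro x
  funext i j
  show ((h₁ i * h₂ i).left j) (x i ((h₁ i * h₂ i).right⁻¹ j)) = _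
  rw [SemidirectProduct.mul_left, SemidirectProduct.mul_right]
  rfl

end AuxPart3
/-- If `Q₁, …, Q_r` are pairwise non-order-isomorphic join-prime abstract polytopes
of rank `≥ 0`, `m₁, …, m_r ≥ 1`, and `P = Q₁^{*m₁} * ⋯ * Q_r^{*m_r}`, then
`Aut(P) ≅ ∏_{i=1}^r (Aut(Q_i)^{m_i} ⋊ Sym(m_i))`. -/
theorem aut_join_prod_pow (r : ℕ) (hr : 1 ≤ r) (Q : Fin r → BddPoset.{u})
    (hdist : ∀ i j, i ≠ j → IsEmpty ((Q i).carrier ≃o (Q j).carrier))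
    (hQ : ∀ i, ∃ k : ℤ, 0 ≤ k ∧ IsAbstractPolytope (Q i).carrier k ∧ JoinPrime (Q i).carrier)
    (m : Fin r → ℕ) (hm : ∀ i, 1 ≤ m i) :
    Nonempty ((((i : Fin r) → Fin (m i) → (Q i).carrier) ≃o
        ((i : Fin r) → Fin (m i) → (Q i).carrier)) ≃*
      ((i : Fin r) → (Fin (m i) → ((Q i).carrier ≃o (Q i).carrier))
        ⋊[permHom (Fin (m i)) ((Q i).carrier ≃o (Q i).carrier)] Equiv.Perm (Fin (m i)))) := by
  classical
  choose n hn0 hpoly hprime using hQ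
  choose t ht using fun i => (hpoly i).exists_top
  have htb : ∀ i, t i ≠ ⊥ := fun i => (hpoly i).top_ne_bot (hn0 i) (ht i)
  refine ⟨(MulEquiv.ofBijective
    (MonoidHom.mk' (fun h => PhiIso Q m h) (Phi_mul Q m)) ⟨?_, ?_⟩).symm⟩
  · -- injectivity
    rw [injective_iff_map_eq_one]
    intro h hh
    have happ : ∀ x, PhiIso Q m h x = x := fun x => DFunLike.congr_fun hh x
    have hright : ∀ i, (h i).right = 1 := by
      intro i
      apply Equiv.ext
      intro j
      show (h i).right j = j
      by_contra hne
      set x : (i' : Fin r) → Fin (m i') → (Q i').carrier :=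
        psingle (fun i' => Fin (m i') → (Q i').carrier) i
          (psingle (fun _ : Fin (m i) => (Q i).carrier) j (t i)) with hxdef
      have hx := happ x
      have h6 := congrFun (congrFun hx i) ((h i).right j)
      have hxi : x i = psingle (fun _ : Fin (m i) => (Q i).carrier) j (t i) := by
        rw [hxdef]
        exact psingle_same _ _
      have hLeft : PhiIso Q m h x i ((h i).right j) = (h i).left ((h i).right j) (t i) := by
        show (h i).left ((h i).right j) (x i ((h i).right⁻¹ ((h i).right j))) = _
        rw [Equiv.Perm.inv_def, Equiv.symm_apply_apply, hxi, psingle_same]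
      rw [hLeft, hxi, psingle_ne hne] at h6
      have h7 := ((h i).left ((h i).right j)).injective
        (h6.trans (OrderIso.map_bot ((h i).left ((h i).right j))).symm)
      exact htb i h7
    have hleft : ∀ (i : Fin r) (j : Fin (m i)), (h i).left j = 1 := by
      intro i j
      apply DFunLike.ext
      intro q
      show (h i).left j q = q
      set x : (i' : Fin r) → Fin (m i') → (Q i').carrier :=
        psingle (fun i' => Fin (m i') → (Q i').carrier) i
          (psingle (fun _ : Fin (m i) => (Q i).carrier) j q) with hxdef
      have hx := happ x
      have h6 := congrFun (congrFun hx i) j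
      have hxi : x i = psingle (fun _ : Fin (m i) => (Q i).carrier) j q := by
        rw [hxdef]
        exact psingle_same _ _
      have hLeft : PhiIso Q m h x i j = (h i).left j q := by
        show (h i).left j (x i ((h i).right⁻¹ j)) = _
        rw [hright i, inv_one]
        show (h i).left j (x i j) = _
        rw [hxi, psingle_same]
      rw [hLeft, hxi, psingle_same] at h6
      exact h6
    funext i
    refine SemidirectProduct.ext ?_ ?_
    · funext j
      rw [hleft i j]
      rfl
    · rw [hright i]
      rfl
  · -- surjectivity
    intro g₀
    set g : (∀ k : (i : Fin r) × Fin (m i), (Q k.1).carrier) ≃o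
        (∀ k : (i : Fin r) × Fin (m i), (Q k.1).carrier) :=
      ((curryIso Q m).symm.trans g₀).trans (curryIso Q m) with hgdef
    obtain ⟨σ, hKEY⟩ := key_decomp (T := fun k : (i : Fin r) × Fin (m i) => t k.1)
      (fun k => ht k.1) (fun k => htb k.1)
      (fun k => ⟨n k.1, hn0 k.1, hpoly k.1⟩) (fun k => hprime k.1) g
    obtain ⟨σ', hKEY'⟩ := key_decomp (T := fun k : (i : Fin r) × Fin (m i) => t k.1)
      (fun k => ht k.1) (fun k => htb k.1)
      (fun k => ⟨n k.1, hn0 k.1, hpoly k.1⟩) (fun k => hprime k.1) g.symm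
    have hinvgen : ∀ (g₁ : (∀ k : (i : Fin r) × Fin (m i), (Q k.1).carrier) ≃o
        (∀ k : (i : Fin r) × Fin (m i), (Q k.1).carrier))
        (σ₁ σ₂ : ((i : Fin r) × Fin (m i)) → ((i : Fin r) × Fin (m i))),
        (∀ x k, g₁ (psingle _ k (x k)) = psingle _ (σ₁ k) (g₁ x (σ₁ k))) →
        (∀ x k, g₁.symm (psingle _ k (x k)) = psingle _ (σ₂ k) (g₁.symm x (σ₂ k))) →
        ∀ k, σ₂ (σ₁ k) = k := by
      intro g₁ σ₁ σ₂ hk1 hk2 k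
      have h1 := hk1 (psingle _ k (t k.1)) k
      rw [psingle_same] at h1
      have h2 := hk2 (psingle _ (σ₁ k) (g₁ (psingle _ k (t k.1)) (σ₁ k))) (σ₁ k)
      rw [psingle_same, ← h1, g₁.symm_apply_apply] at h2
      by_contra hne
      have h3 := congrFun h2 k
      rw [psingle_same, psingle_ne (Ne.symm hne)] at h3
      exact htb k.1 h3
    have hinv1 : ∀ k, σ' (σ k) = k := hinvgen g σ σ' hKEY hKEY'
    have hinv2 : ∀ k, σ (σ' k) = k := by
      apply hinvgen g.symm σ' σ hKEY'
      intro x k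
      rw [OrderIso.symm_symm]
      exact hKEY x k
    have mkIso : ∀ (k l : (i : Fin r) × Fin (m i)), σ k = l →
        ∃ ψ : (Q k.1).carrier ≃o (Q l.1).carrier,
          ∀ x : (∀ k' : (i : Fin r) × Fin (m i), (Q k'.1).carrier), g x l = ψ (x k) := by
      intro k l hkl
      have e1 : ∀ a : (Q k.1).carrier,
          g (psingle _ k a) = psingle _ l (g (psingle _ k a) l) := by
        intro a
        have h1 := hKEY (psingle _ k a) k
        rwa [psingle_same, hkl] at h1
      have e1' : ∀ b : (Q l.1).carrier,
          g.symm (psingle _ l b) = psingle _ k (g.symm (psingle _ l b) k) := by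
        intro b
        have h1 := hKEY' (psingle _ l b) l
        rwa [psingle_same, show σ' l = k from by rw [← hkl, hinv1]] at h1
      refine ⟨{ toFun := fun a => g (psingle _ k a) l,
                invFun := fun b => g.symm (psingle _ l b) k,
                left_inv := ?_, right_inv := ?_, map_rel_iff' := ?_ }, ?_⟩
      · intro a
        dsimp only
        rw [← e1 a, g.symm_apply_apply, psingle_same]
      · intro b
        dsimp only
        rw [← e1' b, g.apply_symm_apply, psingle_same]
      · intro a b
        constructor
        · intro hab
          have hab' : g (psingle _ k a) l ≤ g (psingle _ k b) l := hab
          have h2 : psingle (fun k' : (i : Fin r) × Fin (m i) => (Q k'.1).carrier) l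
              (g (psingle _ k a) l) ≤ psingle (fun k' : (i : Fin r) × Fin (m i) =>
                (Q k'.1).carrier) l (g (psingle _ k b) l) :=
            psingle_le_psingle.mpr hab'
          rw [← e1 a, ← e1 b] at h2
          exact (psingle_le_psingle (P := fun k' : (i : Fin r) × Fin (m i) =>
            (Q k'.1).carrier) (k := k)).mp (g.le_iff_le.mp h2)
        · intro hab
          have h2 : psingle (fun k' : (i : Fin r) × Fin (m i) => (Q k'.1).carrier) k a ≤
              psingle (fun k' : (i : Fin r) × Fin (m i) => (Q k'.1).carrier) k b :=
            psingle_le_psingle.mpr hab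
          have h3 := g.le_iff_le.mpr h2
          rw [e1 a, e1 b] at h3
          show g (psingle _ k a) l ≤ g (psingle _ k b) l
          exact (psingle_le_psingle (P := fun k' : (i : Fin r) × Fin (m i) =>
            (Q k'.1).carrier) (k := l)).mp h3
      · intro x
        have h1 := hKEY x k
        rw [hkl] at h1
        show g x l = g (psingle _ k (x k)) l
        rw [h1, psingle_same]
    have hfst : ∀ k : (i : Fin r) × Fin (m i), (σ k).1 = k.1 := by
      intro k
      by_contra hne
      obtain ⟨ψ, -⟩ := mkIso k (σ k) rfl
      exact (hdist k.1 (σ k).1 (fun hh => hne hh.symm)).elim ψ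
    set τf : ∀ i : Fin r, Fin (m i) → Fin (m i) :=
      fun i j => Fin.cast (congrArg m (hfst ⟨i, j⟩)) (σ ⟨i, j⟩).2 with hτfdef
    have hτ : ∀ (i : Fin r) (j : Fin (m i)), σ ⟨i, j⟩ = ⟨i, τf i j⟩ :=
      fun i j => sigma_fin_eq _ _ (hfst ⟨i, j⟩)
    have hτinj : ∀ i, Function.Injective (τf i) := by
      intro i j j' hjj
      have hσeq : σ ⟨i, j⟩ = σ ⟨i, j'⟩ := by
        rw [hτ i j, hτ i j', hjj]
      have h5 := congrArg σ' hσeq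
      rw [hinv1 ⟨i, j⟩, hinv1 ⟨i, j'⟩] at h5
      simpa using h5
    set τ : ∀ i : Fin r, Equiv.Perm (Fin (m i)) :=
      fun i => Equiv.ofBijective (τf i) (Finite.injective_iff_bijective.mp (hτinj i)) with hτdef
    have hστ : ∀ (i : Fin r) (j : Fin (m i)), σ ⟨i, (τ i).symm j⟩ = ⟨i, j⟩ := by
      intro i j
      rw [hτ i ((τ i).symm j)]
      have h5 : τf i ((τ i).symm j) = j := (τ i).apply_symm_apply j
      rw [h5]
    choose ψf hψ using mkIso
    refine ⟨fun i => ⟨fun j => ψf ⟨i, (τ i).symm j⟩ ⟨i, j⟩ (hστ i j), τ i⟩, ?_⟩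
    have hg0 : ∀ y, g₀ y = (curryIso Q m).symm (g (curryIso Q m y)) := by
      intro y
      rw [hgdef]
      simp [OrderIso.trans_apply]
    apply DFunLike.ext
    intro x
    funext i j
    show ψf ⟨i, (τ i).symm j⟩ ⟨i, j⟩ (hστ i j) (x i ((τ i)⁻¹ j)) = g₀ x i j
    rw [hg0 x]
    exact (hψ ⟨i, (τ i).symm j⟩ ⟨i, j⟩ (hστ i j) (curryIso Q m x)).symm
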